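/- For every bipartite density matrix ρ on ℂ^{d_B}⊗ℂ^{d_C} (finite positive dimensions), the real number Tr[(ρ^Γ)³] satisfies Tr[(ρ^Γ)³] ≤ Tr(ρ²) ≤ 1. -/

import Mathlib

open scoped BigOperators ComplexOrder
open Matrix

noncomputable section

/-- Partial transpose over the second tensor factor. -/
def ptranspose {d d' : ℕ} (M : Matrix (Fin d × Fin d') (Fin d × Fin d') ℂ) :
    Matrix (Fin d × Fin d') (Fin d × Fin d') ℂ :=
  fun p q => M (p.1, q.2) (q.1, p.2)

lemma trace_pow_eq_sum_eig {n : Type*} [Fintype n] [DecidableEq n]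
    {A : Matrix n n ℂ} (hA : A.IsHermitian) (k : ℕ) :
    (A ^ k).trace = ∑ i, ((hA.eigenvalues i : ℂ)) ^ k := by
  set U : Matrix n n ℂ := (hA.eigenvectorUnitary : Matrix n n ℂ) with hUdef
  set D : Matrix n n ℂ := diagonal (RCLike.ofReal ∘ hA.eigenvalues) with hDdef
  have hU1 : U * star U = 1 := (Matrix.mem_unitaryGroup_iff).mp hA.eigenvectorUnitary.2
  have hU2 : star U * U = 1 := (Matrix.mem_unitaryGroup_iff').mp hA.eigenvectorUnitary.2
  have hpow : A ^ k = U * D ^ k * star U := by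
    induction k with
    | zero => simp [pow_zero, Matrix.mul_one, hU1]
    | succ m ih =>
        rw [pow_succ, ih]
        conv_lhs => rw [hA.spectral_theorem]
        calc U * D ^ m * star U * (U * D * star U)
            = U * D ^ m * (star U * U) * D * star U := by simp only [Matrix.mul_assoc]
          _ = U * D ^ (m + 1) * star U := by
              rw [hU2, Matrix.mul_one]
              simp only [Matrix.mul_assoc, pow_succ]
  rw [hpow, Matrix.trace_mul_cycle, hU2, Matrix.one_mul,
    hDdef, Matrix.diagonal_pow, Matrix.trace_diagonal]
  simp

lemma trace_sq_eq {n : Type*} [Fintype n] [DecidableEq n] (N : Matrix n n ℂ) :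
    (N ^ 2).trace = ∑ z : n × n, N z.1 z.2 * N z.2 z.1 := by
  rw [pow_two, Matrix.trace]
  simp only [Matrix.diag_apply, Matrix.mul_apply]
  rw [← Fintype.sum_prod_type']

lemma trace_sq_ptranspose {d d' : ℕ} (M : Matrix (Fin d × Fin d') (Fin d × Fin d') ℂ) :
    ((ptranspose M) ^ 2).trace = (M ^ 2).trace := by
  rw [trace_sq_eq, trace_sq_eq]
  have he : Function.Involutive
      (fun z : (Fin d × Fin d') × (Fin d × Fin d') => ((z.1.1, z.2.2), (z.2.1, z.1.2))) :=
    fun z => rfl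
  exact Fintype.sum_bijective _ he.bijective
    (fun z => ptranspose M z.1 z.2 * ptranspose M z.2 z.1)
    (fun z => M z.1 z.2 * M z.2 z.1) (fun z => rfl)

lemma sum_reorder4 {α β γ δ M : Type*} [Fintype α] [Fintype β] [Fintype γ] [Fintype δ]
    [AddCommMonoid M] (F : α → β → γ → δ → M) :
    ∑ b : α, ∑ c : β, ∑ b' : γ, ∑ c' : δ, F b c b' c'
      = ∑ c : β, ∑ c' : δ, ∑ b : α, ∑ b' : γ, F b c b' c' :=
  calc ∑ b : α, ∑ c : β, ∑ b' : γ, ∑ c' : δ, F b c b' c'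
      = ∑ c : β, ∑ b : α, ∑ b' : γ, ∑ c' : δ, F b c b' c' := Finset.sum_comm
    _ = ∑ c : β, ∑ b : α, ∑ c' : δ, ∑ b' : γ, F b c b' c' :=
        Finset.sum_congr rfl fun _ _ => Finset.sum_congr rfl fun _ _ => Finset.sum_comm
    _ = ∑ c : β, ∑ c' : δ, ∑ b : α, ∑ b' : γ, F b c b' c' :=
        Finset.sum_congr rfl fun _ _ => Finset.sum_comm

lemma quadform_le {d d' : ℕ}
    (ρ : Matrix (Fin d × Fin d') (Fin d × Fin d') ℂ)
    (hρ : ρ.PosSemidef) (htr : ρ.trace = 1)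
    (v : (Fin d × Fin d') → ℂ) :
    (star v ⬝ᵥ (ptranspose ρ) *ᵥ v).re ≤ ∑ p, ‖v p‖ ^ 2 := by
  classical
  obtain ⟨A, hAe⟩ : ∃ A : Matrix (Fin d × Fin d') (Fin d × Fin d') ℂ, ρ = Aᴴ * A := by
    open scoped MatrixOrder in
    obtain ⟨B, hB⟩ := CStarAlgebra.nonneg_iff_eq_star_mul_self.mp hρ.nonneg
    exact ⟨B, hB⟩
  set f : (Fin d × Fin d') → Fin d' → Fin d' → ℂ :=
    fun k c c' => ∑ b, (starRingEnd ℂ) (v (b, c)) * (starRingEnd ℂ) (A k (b, c'))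
    with hf
  -- Step 1: expansion of the quadratic form
  have hexp : star v ⬝ᵥ (ptranspose ρ) *ᵥ v
      = ∑ k, ∑ c, ∑ c', f k c c' * (starRingEnd ℂ) (f k c' c) := by
    have h1 : star v ⬝ᵥ (ptranspose ρ) *ᵥ v
        = ∑ p : Fin d × Fin d', ∑ q : Fin d × Fin d', ∑ k : Fin d × Fin d',
          (starRingEnd ℂ) (v p) * (starRingEnd ℂ) (A k (p.1, q.2))
            * (A k (q.1, p.2) * v q) := by
      simp only [dotProduct, Matrix.mulVec, hAe, ptranspose, Matrix.mul_apply,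
        Matrix.conjTranspose_apply, Pi.star_apply, RCLike.star_def,
        Finset.mul_sum, Finset.sum_mul]
      refine Finset.sum_congr rfl fun p _ => Finset.sum_congr rfl fun q _ =>
        Finset.sum_congr rfl fun k _ => by ring
    have h2 : ∀ (k : Fin d × Fin d') (c c' : Fin d'),
        f k c c' * (starRingEnd ℂ) (f k c' c)
        = ∑ b, ∑ b', (starRingEnd ℂ) (v (b, c)) * (starRingEnd ℂ) (A k (b, c'))
            * (A k (b', c) * v (b', c')) := by
      intro k c c'
      have hc : (starRingEnd ℂ) (f k c' c) = ∑ b', v (b', c') * A k (b', c) := by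
        simp [hf, map_sum]
      rw [hc, hf, Finset.sum_mul_sum]
      exact Finset.sum_congr rfl fun b _ => Finset.sum_congr rfl fun b' _ => by ring
    rw [h1]
    have h3 : ∑ p : Fin d × Fin d', ∑ q : Fin d × Fin d', ∑ k : Fin d × Fin d',
          (starRingEnd ℂ) (v p) * (starRingEnd ℂ) (A k (p.1, q.2)) * (A k (q.1, p.2) * v q)
        = ∑ k : Fin d × Fin d', ∑ p : Fin d × Fin d', ∑ q : Fin d × Fin d',
          (starRingEnd ℂ) (v p) * (starRingEnd ℂ) (A k (p.1, q.2)) * (A k (q.1, p.2) * v q) :=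
      calc _ = ∑ p : Fin d × Fin d', ∑ k : Fin d × Fin d', ∑ q : Fin d × Fin d',
            (starRingEnd ℂ) (v p) * (starRingEnd ℂ) (A k (p.1, q.2)) * (A k (q.1, p.2) * v q) :=
          Finset.sum_congr rfl fun p _ => Finset.sum_comm
        _ = _ := Finset.sum_comm
    rw [h3]
    refine Finset.sum_congr rfl fun k _ => ?_
    simp only [h2]
    calc ∑ p : Fin d × Fin d', ∑ q : Fin d × Fin d',
          (starRingEnd ℂ) (v p) * (starRingEnd ℂ) (A k (p.1, q.2)) * (A k (q.1, p.2) * v q)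
        = ∑ b : Fin d, ∑ c : Fin d', ∑ b' : Fin d, ∑ c' : Fin d',
          (starRingEnd ℂ) (v (b, c)) * (starRingEnd ℂ) (A k (b, c'))
            * (A k (b', c) * v (b', c')) := by
          rw [Fintype.sum_prod_type]
          exact Finset.sum_congr rfl fun b _ => Finset.sum_congr rfl fun c _ =>
            Fintype.sum_prod_type
              (f := fun q : Fin d × Fin d' =>
                (starRingEnd ℂ) (v (b, c)) * (starRingEnd ℂ) (A k (b, q.2))
                  * (A k (q.1, c) * v q))
      _ = _ := sum_reorder4 _
  -- Step 2: take real parts and bound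
  rw [hexp]
  rw [Complex.re_sum]
  have habs : ∀ k : Fin d × Fin d',
      (∑ c, ∑ c', f k c c' * (starRingEnd ℂ) (f k c' c)).re
        ≤ ∑ c, ∑ c', ‖f k c c'‖ ^ 2 := by
    intro k
    rw [Complex.re_sum]
    have step1 : ∀ c, (∑ c', f k c c' * (starRingEnd ℂ) (f k c' c)).re
        ≤ ∑ c', ‖f k c c'‖ * ‖f k c' c‖ := by
      intro c
      rw [Complex.re_sum]
      refine Finset.sum_le_sum fun c' _ => ?_
      calc (f k c c' * (starRingEnd ℂ) (f k c' c)).re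
          ≤ ‖f k c c' * (starRingEnd ℂ) (f k c' c)‖ := Complex.re_le_norm _
        _ = ‖f k c c'‖ * ‖f k c' c‖ := by
            rw [norm_mul, Complex.norm_conj]
    calc ∑ c, (∑ c', f k c c' * (starRingEnd ℂ) (f k c' c)).re
        ≤ ∑ c, ∑ c', ‖f k c c'‖ * ‖f k c' c‖ :=
          Finset.sum_le_sum fun c _ => step1 c
      _ ≤ ∑ c, ∑ c', ‖f k c c'‖ ^ 2 := by
          have h2ab : 2 * (∑ c, ∑ c', ‖f k c c'‖ * ‖f k c' c‖)
              ≤ 2 * (∑ c, ∑ c', ‖f k c c'‖ ^ 2) := by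
            calc 2 * (∑ c, ∑ c', ‖f k c c'‖ * ‖f k c' c‖)
                = ∑ c, ∑ c', 2 * (‖f k c c'‖ * ‖f k c' c‖) := by
                  simp [Finset.mul_sum]
              _ ≤ ∑ c, ∑ c', (‖f k c c'‖ ^ 2 + ‖f k c' c‖ ^ 2) := by
                  refine Finset.sum_le_sum fun c _ => Finset.sum_le_sum fun c' _ => ?_
                  have := two_mul_le_add_sq (‖f k c c'‖) (‖f k c' c‖)
                  linarith
              _ = (∑ c, ∑ c', ‖f k c c'‖ ^ 2)
                  + ∑ c, ∑ c', ‖f k c' c‖ ^ 2 := by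
                  simp [Finset.sum_add_distrib]
              _ = 2 * (∑ c, ∑ c', ‖f k c c'‖ ^ 2) := by
                  rw [show (∑ c, ∑ c', ‖f k c' c‖ ^ 2)
                      = ∑ c, ∑ c', ‖f k c c'‖ ^ 2 from Finset.sum_comm]
                  ring
          linarith
  -- Cauchy-Schwarz per entry
  have hCS : ∀ (k : Fin d × Fin d') (c c' : Fin d'),
      ‖f k c c'‖ ^ 2
        ≤ (∑ b, ‖v (b, c)‖ ^ 2) * (∑ b, ‖A k (b, c')‖ ^ 2) := by
    intro k c c'
    have h1 : ‖f k c c'‖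
        ≤ ∑ b, ‖v (b, c)‖ * ‖A k (b, c')‖ := by
      calc ‖f k c c'‖
          ≤ ∑ b, ‖(starRingEnd ℂ) (v (b, c)) * (starRingEnd ℂ) (A k (b, c'))‖ :=
            norm_sum_le _ _
        _ = ∑ b, ‖v (b, c)‖ * ‖A k (b, c')‖ := by
            simp [norm_mul, Complex.norm_conj]
    calc ‖f k c c'‖ ^ 2
        ≤ (∑ b, ‖v (b, c)‖ * ‖A k (b, c')‖) ^ 2 :=
          pow_le_pow_left₀ (norm_nonneg _) h1 2
      _ ≤ (∑ b, ‖v (b, c)‖ ^ 2) * (∑ b, ‖A k (b, c')‖ ^ 2) :=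
          Finset.sum_mul_sq_le_sq_mul_sq _ _ _
  -- the total mass of A is Tr ρ = 1
  have hAmass : ∑ k : Fin d × Fin d', ∑ c' : Fin d', ∑ b : Fin d,
      ‖A k (b, c')‖ ^ 2 = 1 := by
    have htrre : ρ.trace.re = 1 := by rw [htr]; rfl
    have hexpand : ρ.trace.re
        = ∑ p : Fin d × Fin d', ∑ k : Fin d × Fin d', ‖A k p‖ ^ 2 := by
      rw [Matrix.trace, Complex.re_sum]
      refine Finset.sum_congr rfl fun p _ => ?_
      rw [Matrix.diag_apply, hAe, Matrix.mul_apply, Complex.re_sum]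
      refine Finset.sum_congr rfl fun k _ => ?_
      rw [Matrix.conjTranspose_apply, RCLike.star_def, mul_comm, Complex.mul_conj,
        Complex.ofReal_re, ← Complex.sq_norm]
    have hre : ∑ k : Fin d × Fin d', ∑ c' : Fin d', ∑ b : Fin d,
        ‖A k (b, c')‖ ^ 2
        = ∑ p : Fin d × Fin d', ∑ k : Fin d × Fin d', ‖A k p‖ ^ 2 :=
      calc ∑ k : Fin d × Fin d', ∑ c' : Fin d', ∑ b : Fin d, ‖A k (b, c')‖ ^ 2
          = ∑ k : Fin d × Fin d', ∑ b : Fin d, ∑ c' : Fin d', ‖A k (b, c')‖ ^ 2 :=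
            Finset.sum_congr rfl fun k _ => Finset.sum_comm
        _ = ∑ k : Fin d × Fin d', ∑ p : Fin d × Fin d', ‖A k p‖ ^ 2 :=
            Finset.sum_congr rfl fun k _ =>
              (Fintype.sum_prod_type
                (f := fun p : Fin d × Fin d' => ‖A k p‖ ^ 2)).symm
        _ = _ := Finset.sum_comm
    rw [hre, ← hexpand]
    exact htrre
  calc ∑ k : Fin d × Fin d', (∑ c : Fin d', ∑ c' : Fin d',
        f k c c' * (starRingEnd ℂ) (f k c' c)).re
      ≤ ∑ k : Fin d × Fin d', ∑ c : Fin d', ∑ c' : Fin d', ‖f k c c'‖ ^ 2 :=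
        Finset.sum_le_sum fun k _ => habs k
    _ ≤ ∑ k : Fin d × Fin d', ∑ c : Fin d', ∑ c' : Fin d',
          (∑ b, ‖v (b, c)‖ ^ 2) * (∑ b, ‖A k (b, c')‖ ^ 2) :=
        Finset.sum_le_sum fun k _ => Finset.sum_le_sum fun c _ =>
          Finset.sum_le_sum fun c' _ => hCS k c c'
    _ = (∑ c : Fin d', ∑ b : Fin d, ‖v (b, c)‖ ^ 2)
          * ∑ k : Fin d × Fin d', ∑ c' : Fin d', ∑ b : Fin d,
            ‖A k (b, c')‖ ^ 2 := by
        rw [Finset.mul_sum]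
        exact Finset.sum_congr rfl fun k _ => (Finset.sum_mul_sum _ _ _ _).symm
    _ = ∑ p, ‖v p‖ ^ 2 := by
        rw [hAmass, mul_one]
        rw [Finset.sum_comm]
        exact (Fintype.sum_prod_type
          (f := fun p : Fin d × Fin d' => ‖v p‖ ^ 2)).symm


lemma ptranspose_isHermitian {d d' : ℕ} {ρ : Matrix (Fin d × Fin d') (Fin d × Fin d') ℂ}
    (hρ : ρ.IsHermitian) : (ptranspose ρ).IsHermitian := by
  have h : (ptranspose ρ)ᴴ = ptranspose ρ := by
    ext p q
    show star (ptranspose ρ q p) = ptranspose ρ p q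
    show star (ρ (q.1, p.2) (p.1, q.2)) = ρ (p.1, q.2) (q.1, p.2)
    rw [← Matrix.conjTranspose_apply, hρ]
  exact h

theorem trace_ptranspose_cube_le
    (dB dC : ℕ) (hdB : 0 < dB) (hdC : 0 < dC)
    (ρ : Matrix (Fin dB × Fin dC) (Fin dB × Fin dC) ℂ)
    (hρ : ρ.PosSemidef) (htr : ρ.trace = 1) :
    ((ptranspose ρ) ^ 3).trace.re ≤ ((ρ ^ 2).trace).re ∧ ((ρ ^ 2).trace).re ≤ 1 := by
  have hσH : (ptranspose ρ).IsHermitian := ptranspose_isHermitian hρ.1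
  set μ := hσH.eigenvalues with hμ
  -- eigenvalues of the partial transpose are at most 1
  have hμle : ∀ i, μ i ≤ 1 := by
    intro i
    have he := hσH.eigenvalues_eq i
    have hb := quadform_le ρ hρ htr (hσH.eigenvectorBasis i)
    have hnorm : ∑ p, ‖(hσH.eigenvectorBasis i) p‖ ^ 2 = 1 := by
      have h1 : ‖hσH.eigenvectorBasis i‖ = 1 := hσH.eigenvectorBasis.orthonormal.1 i
      have h2 := EuclideanSpace.norm_eq (hσH.eigenvectorBasis i)
      have hS : 0 ≤ ∑ p, ‖(hσH.eigenvectorBasis i) p‖ ^ 2 :=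
        Finset.sum_nonneg fun _ _ => sq_nonneg _
      rw [h1] at h2
      rw [← Real.sq_sqrt hS, ← h2, one_pow]
    rw [hμ, he]
    simp only [RCLike.re_to_complex]
    exact le_of_le_of_eq hb hnorm
  -- eigenvalues of ρ
  set lam := hρ.1.eigenvalues with hlamdef
  have hlam0 : ∀ i, 0 ≤ lam i := hρ.eigenvalues_nonneg
  have hsum1 : ∑ i, lam i = 1 := by
    have h := trace_pow_eq_sum_eig hρ.1 1
    simp only [pow_one] at h
    rw [htr] at h
    have h2 := congrArg Complex.re h
    simp only [Complex.re_sum, Complex.one_re, Complex.ofReal_re] at h2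
    exact h2.symm
  have hlam1 : ∀ i, lam i ≤ 1 := by
    intro i
    rw [← hsum1]
    exact Finset.single_le_sum (fun j _ => hlam0 j) (Finset.mem_univ i)
  have htr2 : ((ρ ^ 2).trace).re = ∑ i, lam i ^ 2 := by
    rw [trace_pow_eq_sum_eig hρ.1 2, Complex.re_sum]
    simp [← Complex.ofReal_pow]
    rfl
  have hσ3 : ((ptranspose ρ) ^ 3).trace.re = ∑ i, μ i ^ 3 := by
    rw [trace_pow_eq_sum_eig hσH 3, Complex.re_sum]
    simp [← Complex.ofReal_pow]
    rfl
  have hσ2 : ((ptranspose ρ) ^ 2).trace.re = ∑ i, μ i ^ 2 := by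
    rw [trace_pow_eq_sum_eig hσH 2, Complex.re_sum]
    simp [← Complex.ofReal_pow]
    rfl
  have hσ2ρ2 : ((ptranspose ρ) ^ 2).trace = (ρ ^ 2).trace := trace_sq_ptranspose ρ
  constructor
  · have : ((ρ ^ 2).trace).re = ∑ i, μ i ^ 2 := by rw [← hσ2ρ2]; exact hσ2
    rw [hσ3, this]
    refine Finset.sum_le_sum fun i _ => ?_
    nlinarith [sq_nonneg (μ i), hμle i]
  · rw [htr2]
    calc ∑ i, lam i ^ 2 ≤ ∑ i, lam i * 1 := by
          refine Finset.sum_le_sum fun i _ => ?_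
          nlinarith [hlam0 i, hlam1 i]
      _ = 1 := by simp [hsum1]

end
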